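/- For every real κ with 1 < κ < 4, the boundary of the tangency disk is covered by the four disks d₁, d₂, d₋₁, d₋₂ of the standard pyramidal disk packing: every point p = (x, y) ∈ ℝ² with x² + (y − 2/κ)² = (κ²+4)/κ² satisfies at least one of the following: y ≥ 1, or ‖p − (0, 1/κ − 1)‖ ≤ 1/κ, or ‖p − (2/√κ, 0)‖ ≤ 1, or ‖p − (−2/√κ, 0)‖ ≤ 1. -/

import Mathlib

noncomputable section

open Metric

/-- The half-plane `{(x,y) : y ≤ −1}`. -/
def dx : Set (EuclideanSpace ℝ (Fin 2)) := {p | p 1 ≤ -1}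

/-- The half-plane `{(x,y) : y ≥ 1}`. -/
def dm1 : Set (EuclideanSpace ℝ (Fin 2)) := {p | 1 ≤ p 1}

/-- The closed disk of radius `1/κ` centered at `(0, 1/κ − 1)`. -/
def d1 (κ : ℝ) : Set (EuclideanSpace ℝ (Fin 2)) :=
  closedBall (WithLp.toLp 2 ![0, 1 / κ - 1] : EuclideanSpace ℝ (Fin 2)) (1 / κ)

/-- The closed unit disk centered at `(2/√κ, 0)`. -/
def d2 (κ : ℝ) : Set (EuclideanSpace ℝ (Fin 2)) :=
  closedBall (WithLp.toLp 2 ![2 / Real.sqrt κ, 0] : EuclideanSpace ℝ (Fin 2)) 1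

/-- The closed unit disk centered at `(−2/√κ, 0)`. -/
def dm2 (κ : ℝ) : Set (EuclideanSpace ℝ (Fin 2)) :=
  closedBall (WithLp.toLp 2 ![-(2 / Real.sqrt κ), 0] : EuclideanSpace ℝ (Fin 2)) 1

lemma mem_closedBall_of_sq (c p : EuclideanSpace ℝ (Fin 2)) (r : ℝ) (hr : 0 ≤ r)
    (h : (p 0 - c 0) ^ 2 + (p 1 - c 1) ^ 2 ≤ r ^ 2) : p ∈ closedBall c r := by
  rw [mem_closedBall, EuclideanSpace.dist_eq, Fin.sum_univ_two,
    Real.dist_eq, Real.dist_eq, sq_abs, sq_abs]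
  calc Real.sqrt ((p 0 - c 0) ^ 2 + (p 1 - c 1) ^ 2) ≤ Real.sqrt (r ^ 2) :=
        Real.sqrt_le_sqrt h
    _ = r := Real.sqrt_sq hr

set_option maxHeartbeats 1000000 in
/-- For `1 < κ < 4`, the boundary circle of the tangency disk is covered by the
four disks `d₁, d₂, d₋₁, d₋₂` of the standard pyramidal disk packing. -/
theorem tangency_circle_covered (κ : ℝ) (hκ1 : 1 < κ) (hκ4 : κ < 4) :
    ∀ p : EuclideanSpace ℝ (Fin 2),
      (p 0) ^ 2 + (p 1 - 2 / κ) ^ 2 = (κ ^ 2 + 4) / κ ^ 2 →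
      p ∈ dm1 ∨ p ∈ d1 κ ∨ p ∈ d2 κ ∨ p ∈ dm2 κ := by
  intro p hp
  have hκ0 : (0 : ℝ) < κ := by linarith
  set a := p 0 with ha0
  set b := p 1 with hb0
  have hκne : κ ≠ 0 := ne_of_gt hκ0
  have key : κ ^ 2 * a ^ 2 = κ ^ 2 * (1 - b ^ 2) + 4 * κ * b := by
    field_simp at hp
    nlinarith [hp]
  have key2 : κ * a ^ 2 = κ * (1 - b ^ 2) + 4 * b := by
    have h : κ * (κ * a ^ 2) = κ * (κ * (1 - b ^ 2) + 4 * b) := by linear_combination key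
    exact mul_left_cancel₀ hκne h
  by_cases hb1 : 1 ≤ b
  · exact Or.inl hb1
  push_neg at hb1
  right
  by_cases hbd : b ≤ (1 - κ) / (1 + κ)
  · -- in d1
    left
    have hb' : b * (1 + κ) ≤ 1 - κ := by
      rw [le_div_iff₀ (by linarith)] at hbd
      linarith
    rw [d1]
    apply mem_closedBall_of_sq
    · positivity
    · simp only [PiLp.toLp_apply, Matrix.cons_val_zero, Matrix.cons_val_one, Matrix.head_cons]
      have hκ2 : (0 : ℝ) < κ ^ 2 := by positivity
      rw [← mul_le_mul_iff_right₀ hκ2]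
      have e1 : κ ^ 2 * ((a - 0) ^ 2 + (b - (1 / κ - 1)) ^ 2)
          = κ ^ 2 * a ^ 2 + (κ * b - 1 + κ) ^ 2 := by
        field_simp
        ring
      have e2 : κ ^ 2 * (1 / κ) ^ 2 = 1 := by field_simp
      rw [e1, e2]
      nlinarith [key, hb', hκ0]
  · push_neg at hbd
    have hb' : 1 - κ < b * (1 + κ) := by
      rw [div_lt_iff₀ (by linarith)] at hbd
      linarith
    have hbp : 0 < b + 1 := by nlinarith
    have ha2 : (b + 1) ^ 2 ≤ κ * a ^ 2 := by
      nlinarith [key2, mul_pos (by linarith : (0:ℝ) < 1 - b)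
        (by linarith : (0:ℝ) < b * (1 + κ) - (1 - κ))]
    set s := Real.sqrt κ with hs
    have hs0 : 0 < s := Real.sqrt_pos.mpr hκ0
    have hs2 : s ^ 2 = κ := Real.sq_sqrt hκ0.le
    have hsne : s ≠ 0 := ne_of_gt hs0
    have key3 : s ^ 2 * a ^ 2 = s ^ 2 * (1 - b ^ 2) + 4 * b := by rw [hs2]; exact key2
    rcases le_or_gt 0 a with hA | hA
    · -- in d2
      right; left
      have hsa : b + 1 ≤ s * a := by
        have h1 : (b + 1) ^ 2 ≤ (s * a) ^ 2 := by
          calc (b + 1) ^ 2 ≤ κ * a ^ 2 := ha2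
            _ = (s * a) ^ 2 := by rw [mul_pow, hs2]
        nlinarith [h1, mul_nonneg hs0.le hA, hbp]
      rw [d2]
      apply mem_closedBall_of_sq
      · norm_num
      · simp only [PiLp.toLp_apply, Matrix.cons_val_zero, Matrix.cons_val_one, Matrix.head_cons]
        have hs2' : (0 : ℝ) < s ^ 2 := by positivity
        rw [← mul_le_mul_iff_right₀ hs2']
        have e1 : s ^ 2 * ((a - 2 / s) ^ 2 + (b - 0) ^ 2)
            = (s * a - 2) ^ 2 + s ^ 2 * b ^ 2 := by
          field_simp
          ring
        rw [e1, one_pow, mul_one]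
        nlinarith [key3, hsa]
    · -- in dm2
      right; right
      have hsa : b + 1 ≤ s * (-a) := by
        have h1 : (b + 1) ^ 2 ≤ (s * (-a)) ^ 2 := by
          calc (b + 1) ^ 2 ≤ κ * a ^ 2 := ha2
            _ = (s * (-a)) ^ 2 := by rw [mul_pow, hs2]; ring
        nlinarith [h1, mul_nonneg hs0.le (by linarith : (0:ℝ) ≤ -a), hbp]
      rw [dm2]
      apply mem_closedBall_of_sq
      · norm_num
      · simp only [PiLp.toLp_apply, Matrix.cons_val_zero, Matrix.cons_val_one, Matrix.head_cons]
        have hs2' : (0 : ℝ) < s ^ 2 := by positivity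
        rw [← mul_le_mul_iff_right₀ hs2']
        have e1 : s ^ 2 * ((a - -(2 / s)) ^ 2 + (b - 0) ^ 2)
            = (s * a + 2) ^ 2 + s ^ 2 * b ^ 2 := by
          field_simp
          ring
        rw [e1, one_pow, mul_one]
        nlinarith [key3, hsa]
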